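/- Let c > 0 and let A₀ ∈ End(V) and S₀ a symmetric endomorphism of a finite-dimensional real inner product space V. Suppose J(t) = cos(√c t)·I − (sin(√c t)/√c)·A₀ is invertible for all t ∈ [0, π/√c) and S(t) = S₀·J(t)⁻¹ is symmetric with constant signature on [0, π/√c). Since J(t) → −I as t → π/√c, in the limit S(t) → −S₀; by constancy of the numbers of positive and negative eigenvalues, S₀ has equally many positive and negative eigenvalues. In particular, if S₀ is positive semidefinite or negative semidefinite, then S₀ = 0. -/
import Mathlib


open scoped RealInnerProductSpace

/-- The maximal dimension of a subspace on which the quadratic form of `T` is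
positive definite (the number of positive eigenvalues when `T` is symmetric). -/
noncomputable def posIndex {V : Type*} [NormedAddCommGroup V]
    [InnerProductSpace ℝ V] [FiniteDimensional ℝ V] (T : V →ₗ[ℝ] V) : ℕ :=
  sSup {d | ∃ W : Submodule ℝ V, Module.finrank ℝ W = d ∧
    ∀ v ∈ W, v ≠ 0 → 0 < ⟪T v, v⟫}

/-- The number of negative eigenvalues of a symmetric endomorphism. -/
noncomputable def negIndex {V : Type*} [NormedAddCommGroup V]
    [InnerProductSpace ℝ V] [FiniteDimensional ℝ V] (T : V →ₗ[ℝ] V) : ℕ :=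
  sSup {d | ∃ W : Submodule ℝ V, Module.finrank ℝ W = d ∧
    ∀ v ∈ W, v ≠ 0 → ⟪T v, v⟫ < 0}

section Aux

variable {V : Type*} [NormedAddCommGroup V] [InnerProductSpace ℝ V]
  [FiniteDimensional ℝ V]

lemma posSet_bdd (T : V →ₗ[ℝ] V) :
    BddAbove {d | ∃ W : Submodule ℝ V, Module.finrank ℝ W = d ∧
      ∀ v ∈ W, v ≠ 0 → 0 < ⟪T v, v⟫} := by
  refine ⟨Module.finrank ℝ V, fun d hd => ?_⟩
  obtain ⟨W, hW, -⟩ := hd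
  exact hW ▸ Submodule.finrank_le W

lemma negSet_bdd (T : V →ₗ[ℝ] V) :
    BddAbove {d | ∃ W : Submodule ℝ V, Module.finrank ℝ W = d ∧
      ∀ v ∈ W, v ≠ 0 → ⟪T v, v⟫ < 0} := by
  refine ⟨Module.finrank ℝ V, fun d hd => ?_⟩
  obtain ⟨W, hW, -⟩ := hd
  exact hW ▸ Submodule.finrank_le W

lemma posSet_nonempty (T : V →ₗ[ℝ] V) :
    Set.Nonempty {d | ∃ W : Submodule ℝ V, Module.finrank ℝ W = d ∧
      ∀ v ∈ W, v ≠ 0 → 0 < ⟪T v, v⟫} := by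
  refine ⟨0, ⊥, finrank_bot ℝ V, fun v hv hv0 => absurd hv hv0⟩

lemma negIndex_eq_posIndex_neg (T : V →ₗ[ℝ] V) :
    negIndex T = posIndex (-T) := by
  unfold negIndex posIndex
  congr 1
  ext d
  constructor
  · rintro ⟨W, hW, h⟩
    exact ⟨W, hW, fun v hv hv0 => by
      simpa [inner_neg_left, neg_pos] using h v hv hv0⟩
  · rintro ⟨W, hW, h⟩
    exact ⟨W, hW, fun v hv hv0 => by
      simpa [inner_neg_left, neg_pos] using h v hv hv0⟩

lemma le_posIndex (T : V →ₗ[ℝ] V) (W : Submodule ℝ V)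
    (h : ∀ v ∈ W, v ≠ 0 → 0 < ⟪T v, v⟫) :
    Module.finrank ℝ W ≤ posIndex T :=
  le_csSup (posSet_bdd T) ⟨W, rfl, h⟩

lemma posIndex_mem (T : V →ₗ[ℝ] V) :
    ∃ W : Submodule ℝ V, Module.finrank ℝ W = posIndex T ∧
      ∀ v ∈ W, v ≠ 0 → 0 < ⟪T v, v⟫ :=
  Nat.sSup_mem (posSet_nonempty T) (posSet_bdd T)

/-- positivity on unit vectors upgrades to positivity on nonzero vectors -/
lemma pos_of_unit (T : V →ₗ[ℝ] V) (W : Submodule ℝ V)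
    (h : ∀ v ∈ W, ‖v‖ = 1 → 0 < ⟪T v, v⟫) :
    ∀ v ∈ W, v ≠ 0 → 0 < ⟪T v, v⟫ := by
  intro v hv hv0
  set u : V := (‖v‖ : ℝ)⁻¹ • v with hu
  have hun : ‖u‖ = 1 := by
    rw [hu, norm_smul]
    simp [norm_ne_zero_iff.mpr hv0]
  have huW : u ∈ W := W.smul_mem _ hv
  have hpos := h u huW hun
  have hv' : v = ‖v‖ • u := by
    rw [hu, smul_smul]
    simp [norm_ne_zero_iff.mpr hv0]
  have heq : ⟪T u, u⟫ = ‖v‖⁻¹ * (‖v‖⁻¹ * ⟪T v, v⟫) := by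
    rw [hu, map_smul, real_inner_smul_left, real_inner_smul_right]
  rw [heq] at hpos
  nlinarith [mul_self_nonneg (‖v‖⁻¹), hpos]

/-- Stability of posIndex under small perturbation (lower semicontinuity). -/
lemma posIndex_stable (T : V →L[ℝ] V) :
    ∃ ε > 0, ∀ T' : V →L[ℝ] V, ‖T' - T‖ < ε →
      posIndex (T : V →ₗ[ℝ] V) ≤ posIndex (T' : V →ₗ[ℝ] V) := by
  obtain ⟨W, hW, hpos⟩ := posIndex_mem (T : V →ₗ[ℝ] V)
  by_cases h0 : posIndex (T : V →ₗ[ℝ] V) = 0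
  · exact ⟨1, one_pos, fun T' _ => h0 ▸ Nat.zero_le _⟩
  -- the unit sphere of W
  set s : Set V := (W : Set V) ∩ Metric.sphere 0 1 with hs
  have hsc : IsCompact s := by
    have h1 : IsClosed (W : Set V) := Submodule.closed_of_finiteDimensional W
    have h2 : IsCompact (Metric.sphere (0:V) 1) := isCompact_sphere 0 1
    exact h2.inter_left h1
  have hsne : s.Nonempty := by
    have : W ≠ ⊥ := by
      intro hbot
      rw [hbot] at hW
      simp [finrank_bot] at hW
      exact h0 hW.symm
    obtain ⟨v, hvW, hv0⟩ := Submodule.exists_mem_ne_zero_of_ne_bot this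
    refine ⟨(‖v‖:ℝ)⁻¹ • v, W.smul_mem _ hvW, ?_⟩
    simp [norm_smul, norm_ne_zero_iff.mpr hv0]
  have hcont : ContinuousOn (fun v : V => ⟪T v, v⟫) s :=
    (Continuous.inner (T.continuous) continuous_id).continuousOn
  obtain ⟨u₀, hu₀s, hu₀min⟩ := hsc.exists_isMinOn hsne hcont
  set m : ℝ := ⟪T u₀, u₀⟫ with hm
  have hmpos : 0 < m := by
    have : u₀ ≠ 0 := by
      intro h
      have := hu₀s.2
      rw [h] at this
      simp at this
    exact hpos u₀ hu₀s.1 this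
  refine ⟨m, hmpos, fun T' hT' => ?_⟩
  rw [← hW]
  apply le_posIndex
  apply pos_of_unit
  intro v hv hv1
  have hvs : v ∈ s := ⟨hv, by simpa using hv1⟩
  have h1 : m ≤ ⟪T v, v⟫ := hu₀min hvs
  have h2 : |⟪(T' - T) v, v⟫| ≤ ‖T' - T‖ := by
    calc |⟪(T' - T) v, v⟫| ≤ ‖(T' - T) v‖ * ‖v‖ := abs_real_inner_le_norm _ _
      _ ≤ ‖T' - T‖ * ‖v‖ * ‖v‖ :=
        mul_le_mul_of_nonneg_right ((T' - T).le_opNorm v) (norm_nonneg v)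
      _ = ‖T' - T‖ := by rw [hv1]; ring
  have h3 : ⟪(T':V →ₗ[ℝ] V) v, v⟫ = ⟪T v, v⟫ + ⟪(T' - T) v, v⟫ := by
    simp only [ContinuousLinearMap.coe_coe, ContinuousLinearMap.sub_apply,
      inner_sub_left]
    ring
  rw [h3]
  have h4 : -‖T' - T‖ ≤ ⟪(T' - T) v, v⟫ := neg_le_of_abs_le h2
  linarith

lemma posIndex_zero_of (T : V →ₗ[ℝ] V) (h : posIndex T = 0) :
    ∀ v : V, ⟪T v, v⟫ ≤ 0 := by
  intro v
  by_contra hlt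
  push_neg at hlt
  have hv0 : v ≠ 0 := by
    intro h0; rw [h0] at hlt; simp at hlt
  have : (1 : ℕ) ≤ posIndex T := by
    have := le_posIndex T (Submodule.span ℝ {v}) ?_
    · rwa [finrank_span_singleton hv0] at this
    · apply pos_of_unit
      intro w hw hw1
      obtain ⟨a, rfl⟩ := Submodule.mem_span_singleton.mp hw
      have ha : a ≠ 0 := by
        intro h0; rw [h0] at hw1; simp at hw1
      rw [map_smul, real_inner_smul_left, real_inner_smul_right]
      have haa : 0 < a * a := mul_self_pos.mpr ha
      nlinarith
  omega

lemma symm_zero (S : V →L[ℝ] V) (hS : LinearMap.IsSymmetric (S : V →ₗ[ℝ] V))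
    (h : ∀ v : V, ⟪S v, v⟫ = 0) : S = 0 := by
  ext x
  simp only [ContinuousLinearMap.zero_apply]
  rw [← inner_self_eq_zero (𝕜 := ℝ) (x := S x)]
  have key : ∀ y : V, ⟪S x, y⟫ = 0 := by
    intro y
    have h1 := h (x + y)
    have h2 := h x
    have h3 := h y
    have hsym : ⟪S y, x⟫ = ⟪S x, y⟫ :=
      (hS y x).trans (real_inner_comm _ _)
    simp only [map_add, inner_add_left, inner_add_right] at h1
    rw [hsym] at h1
    linarith
  exact key (S x)

end Aux
section Aux2
variable {V : Type*} [NormedAddCommGroup V] [InnerProductSpace ℝ V]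
  [FiniteDimensional ℝ V]

lemma posIndex_eq_zero (T : V →ₗ[ℝ] V) (h : ∀ v : V, ⟪T v, v⟫ ≤ 0) :
    posIndex T = 0 := by
  refine Nat.le_zero.mp (csSup_le (posSet_nonempty T) ?_)
  rintro d ⟨W, hW, hp⟩
  by_contra hd
  have hWne : W ≠ ⊥ := by
    intro hbot
    rw [hbot] at hW
    simp [finrank_bot] at hW
    omega
  obtain ⟨v, hvW, hv0⟩ := Submodule.exists_mem_ne_zero_of_ne_bot hWne
  exact absurd (hp v hvW hv0) (not_lt.mpr (h v))

lemma zero_of_nonneg (S : V →L[ℝ] V) (hS : LinearMap.IsSymmetric (S : V →ₗ[ℝ] V))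
    (heq : posIndex (S : V →ₗ[ℝ] V) = negIndex (S : V →ₗ[ℝ] V))
    (h : ∀ v : V, 0 ≤ ⟪S v, v⟫) : S = 0 := by
  have hneg : negIndex (S : V →ₗ[ℝ] V) = 0 := by
    rw [negIndex_eq_posIndex_neg]
    apply posIndex_eq_zero
    intro v
    simp only [LinearMap.neg_apply, inner_neg_left]
    have := h v
    simp only [ContinuousLinearMap.coe_coe] at *
    linarith
  have hpos : posIndex (S : V →ₗ[ℝ] V) = 0 := heq.trans hneg
  have hle := posIndex_zero_of (S : V →ₗ[ℝ] V) hpos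
  apply symm_zero S hS
  intro v
  exact le_antisymm (by simpa using hle v) (h v)

end Aux2

/-- for `c > 0`, `J(t) = cos(√c t)·I − (sin(√c t)/√c)·A₀` invertible
on `[0, π/√c)` and `S(t) = S₀·J(t)⁻¹` symmetric with constant signature, the
numbers of positive and negative eigenvalues of `S₀` coincide; in particular a
semidefinite `S₀` vanishes. -/
theorem stmt_16 {V : Type*} [NormedAddCommGroup V] [InnerProductSpace ℝ V]
    [FiniteDimensional ℝ V]
    (c : ℝ) (hc : 0 < c) (A₀ S₀ : V →L[ℝ] V) (J : ℝ → (V →L[ℝ] V))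
    (hS₀ : LinearMap.IsSymmetric (S₀ : V →ₗ[ℝ] V))
    (hJdef : ∀ t : ℝ, J t =
      Real.cos (Real.sqrt c * t) • (1 : V →L[ℝ] V)
        - (Real.sin (Real.sqrt c * t) / Real.sqrt c) • A₀)
    (hJinv : ∀ t ∈ Set.Ico (0 : ℝ) (Real.pi / Real.sqrt c), IsUnit (J t))
    (hsymm : ∀ t ∈ Set.Ico (0 : ℝ) (Real.pi / Real.sqrt c),
      LinearMap.IsSymmetric ((S₀ * Ring.inverse (J t) : V →L[ℝ] V) : V →ₗ[ℝ] V))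
    (hsig : ∀ t ∈ Set.Ico (0 : ℝ) (Real.pi / Real.sqrt c),
      posIndex ((S₀ * Ring.inverse (J t) : V →L[ℝ] V) : V →ₗ[ℝ] V) =
          posIndex (S₀ : V →ₗ[ℝ] V) ∧
        negIndex ((S₀ * Ring.inverse (J t) : V →L[ℝ] V) : V →ₗ[ℝ] V) =
          negIndex (S₀ : V →ₗ[ℝ] V)) :
    posIndex (S₀ : V →ₗ[ℝ] V) = negIndex (S₀ : V →ₗ[ℝ] V) ∧
      (((∀ v : V, 0 ≤ ⟪S₀ v, v⟫) ∨ (∀ v : V, ⟪S₀ v, v⟫ ≤ 0)) → S₀ = 0) := by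
  have hsq : (0:ℝ) < Real.sqrt c := Real.sqrt_pos.mpr hc
  set t₀ : ℝ := Real.pi / Real.sqrt c with ht₀def
  have ht₀ : 0 < t₀ := div_pos Real.pi_pos hsq
  -- J t₀ = -1
  have hJt₀ : J t₀ = -1 := by
    rw [hJdef t₀, ht₀def, mul_div_cancel₀ _ (ne_of_gt hsq), Real.cos_pi, Real.sin_pi]
    simp
  -- continuity of J
  have hJcont : Continuous J := by
    rw [funext hJdef]
    exact ((Real.continuous_cos.comp (continuous_const.mul continuous_id)).smul
      continuous_const).sub
      (((Real.continuous_sin.comp (continuous_const.mul continuous_id)).div_const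
        _).smul continuous_const)
  -- the unit -1
  have humul : (-1 : V →L[ℝ] V) * (-1) = 1 := by
    rw [neg_mul_neg, one_mul]
  set u : (V →L[ℝ] V)ˣ := ⟨-1, -1, humul, humul⟩ with hu
  have hinvneg : Ring.inverse (-1 : V →L[ℝ] V) = -1 := by
    have h1 : Ring.inverse ((u : V →L[ℝ] V)) = ((u⁻¹ : (V →L[ℝ] V)ˣ) : V →L[ℝ] V) :=
      Ring.inverse_unit u
    have h2 : (u⁻¹ : (V →L[ℝ] V)ˣ) = u := inv_eq_of_mul_eq_one_right (Units.ext humul)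
    rw [h2] at h1
    exact h1
  -- limit of S(t)
  set G : ℝ → (V →L[ℝ] V) := fun t => S₀ * Ring.inverse (J t) with hG
  have hGcont : ContinuousAt G t₀ := by
    apply ContinuousAt.mul continuousAt_const
    have h1 : ContinuousAt Ring.inverse (J t₀) := by
      rw [hJt₀]
      exact NormedRing.inverse_continuousAt u
    exact h1.comp hJcont.continuousAt
  have hGval : G t₀ = -S₀ := by
    rw [hG]
    simp only [hJt₀, hinvneg, mul_neg, mul_one]
  have htend : Filter.Tendsto G (nhdsWithin t₀ (Set.Iio t₀)) (nhds (-S₀)) := by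
    rw [← hGval]
    exact hGcont.continuousWithinAt.tendsto
  -- the two stability radii
  obtain ⟨ε₁, hε₁, hst₁⟩ := posIndex_stable (-S₀)
  obtain ⟨ε₂, hε₂, hst₂⟩ := posIndex_stable S₀
  set ε : ℝ := min ε₁ ε₂ with hε
  have hεpos : 0 < ε := lt_min hε₁ hε₂
  -- find t ∈ [0, t₀) with ‖G t + S₀‖ < ε
  have hev1 : ∀ᶠ t in nhdsWithin t₀ (Set.Iio t₀), dist (G t) (-S₀) < ε :=
    (Metric.tendsto_nhds.mp htend) ε hεpos
  have hev2 : ∀ᶠ t in nhdsWithin t₀ (Set.Iio t₀), t ∈ Set.Ico 0 t₀ := by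
    have h1 : ∀ᶠ t in nhdsWithin t₀ (Set.Iio t₀), (0:ℝ) < t :=
      eventually_nhdsWithin_of_eventually_nhds (eventually_gt_nhds ht₀)
    have h2 : ∀ᶠ t in nhdsWithin t₀ (Set.Iio t₀), t ∈ Set.Iio t₀ :=
      eventually_mem_nhdsWithin
    filter_upwards [h1, h2] with t h1t h2t
    exact ⟨le_of_lt h1t, h2t⟩
  obtain ⟨t, hdist, htIco⟩ := (hev1.and hev2).exists
  have hnorm : ‖G t - (-S₀)‖ < ε := by rwa [← dist_eq_norm]
  -- part 1
  have hmain : posIndex (S₀ : V →ₗ[ℝ] V) = negIndex (S₀ : V →ₗ[ℝ] V) := by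
    obtain ⟨hsigp, hsign⟩ := hsig t htIco
    apply le_antisymm
    · -- posIndex S₀ = posIndex (G t), negIndex S₀ = negIndex (G t) = posIndex (-G t)
      have hn2 : ‖-(G t) - S₀‖ < ε₂ := by
        have : -(G t) - S₀ = -(G t - (-S₀)) := by abel
        rw [this, norm_neg]
        exact lt_of_lt_of_le hnorm (min_le_right _ _)
      have := hst₂ (-(G t)) hn2
      calc posIndex (S₀ : V →ₗ[ℝ] V)
          ≤ posIndex (((-(G t)) : V →L[ℝ] V) : V →ₗ[ℝ] V) := this
        _ = negIndex ((G t : V →L[ℝ] V) : V →ₗ[ℝ] V) := by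
            rw [negIndex_eq_posIndex_neg]
            congr 1
        _ = negIndex (S₀ : V →ₗ[ℝ] V) := hsign
    · have hn1 : ‖G t - (-S₀)‖ < ε₁ := lt_of_lt_of_le hnorm (min_le_left _ _)
      have := hst₁ (G t) hn1
      calc negIndex (S₀ : V →ₗ[ℝ] V)
          = posIndex (-(S₀ : V →ₗ[ℝ] V)) := negIndex_eq_posIndex_neg _
        _ = posIndex (((-S₀ : V →L[ℝ] V)) : V →ₗ[ℝ] V) := by congr 1
        _ ≤ posIndex ((G t : V →L[ℝ] V) : V →ₗ[ℝ] V) := this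
        _ = posIndex (S₀ : V →ₗ[ℝ] V) := hsigp
  refine ⟨hmain, ?_⟩
  rintro (h | h)
  · exact zero_of_nonneg S₀ hS₀ hmain h
  · have hS' : LinearMap.IsSymmetric (((-S₀ : V →L[ℝ] V)) : V →ₗ[ℝ] V) := by
      intro x y
      simp only [ContinuousLinearMap.coe_neg, LinearMap.neg_apply, inner_neg_left,
        inner_neg_right]
      rw [hS₀ x y]
    have heq' : posIndex (((-S₀ : V →L[ℝ] V)) : V →ₗ[ℝ] V)
        = negIndex (((-S₀ : V →L[ℝ] V)) : V →ₗ[ℝ] V) := by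
      have e1 : (((-S₀ : V →L[ℝ] V)) : V →ₗ[ℝ] V) = -(S₀ : V →ₗ[ℝ] V) := by simp
      rw [e1, ← negIndex_eq_posIndex_neg, negIndex_eq_posIndex_neg (-(S₀ : V →ₗ[ℝ] V)),
        neg_neg]
      exact hmain.symm
    have h' : ∀ v : V, 0 ≤ ⟪(-S₀ : V →L[ℝ] V) v, v⟫ := by
      intro v
      simp only [ContinuousLinearMap.neg_apply, inner_neg_left]
      linarith [h v]
    have := zero_of_nonneg (-S₀) hS' heq' h'
    simpa [neg_eq_zero] using this
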